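/- Let Ω ⊆ ℝ^d be open, K ⊆ Ω compact, (x_{0,ε}) a net of points of K, and (u_ε) a moderate net of smooth functions on Ω. Then the following are equivalent: (1) there exists a slow scale infinitesimal net (r_ε) of positive reals such that for every moderate net (x_ε) for which there is a negligible net (n_ε) with |x_ε − x_{0,ε}| ≤ r_ε + n_ε for small ε, there exists N ∈ ℕ such that for every multi-index α there is a negligible net (n^{(α)}_ε) with |∂^α u_ε(x_ε)| ≤ ε^{−N} + n^{(α)}_ε for small ε; (2) there exists N ∈ ℕ such that for every multi-index α and every moderate net (x_ε) with (x_ε − x_{0,ε}) a fast scale infinitesimal, there is a negligible net (n^{(α)}_ε) with |∂^α u_ε(x_ε)| ≤ ε^{−N} + n^{(α)}_ε for small ε; (3) there exists N ∈ ℕ such that for every integer m ≥ 1 and every multi-index α, sup over {x : |x − x_{0,ε}| ≤ ε^{1/m}} of |∂^α u_ε(x)| ≤ ε^{−N} for small ε. -/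

import Mathlib

open MeasureTheory Set Metric
open scoped RealInnerProductSpace

noncomputable section

/-- Euclidean space `ℝ^d`. -/
abbrev Eu (d : ℕ) : Type := EuclideanSpace ℝ (Fin d)

/-- A property of `ε` holds "for small ε", i.e. on some interval `(0, ε₀]`. -/
def SmallE (P : ℝ → Prop) : Prop :=
  ∃ ε₀ : ℝ, 0 < ε₀ ∧ ∀ ε : ℝ, 0 < ε → ε ≤ ε₀ → P ε

/-- A net in a normed space is moderate. -/
def ModNet {V : Type*} [NormedAddCommGroup V] (x : ℝ → V) : Prop :=
  ∃ N : ℕ, SmallE fun ε => ‖x ε‖ ≤ ε ^ (-(N : ℝ))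

/-- A net in a normed space is negligible. -/
def NegNet {V : Type*} [NormedAddCommGroup V] (x : ℝ → V) : Prop :=
  ∀ m : ℕ, SmallE fun ε => ‖x ε‖ ≤ ε ^ (m : ℝ)

/-- A fast scale infinitesimal net. -/
def FastInf {V : Type*} [NormedAddCommGroup V] (x : ℝ → V) : Prop :=
  ∃ a : ℝ, 0 < a ∧ SmallE fun ε => ‖x ε‖ ≤ ε ^ a

/-- A slow scale infinitesimal net of positive reals. -/
def SlowInfPos (r : ℝ → ℝ) : Prop :=
  (∀ ε : ℝ, 0 < ε → ε ≤ 1 → 0 < r ε) ∧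
    ∀ a : ℝ, 0 < a → SmallE fun ε => ε ^ a ≤ r ε ∧ r ε ≤ a

/-- A fast scale net. -/
def FastScale {V : Type*} [NormedAddCommGroup V] (x : ℝ → V) : Prop :=
  ∃ a : ℝ, 0 < a ∧ SmallE fun ε => ε ^ (-a) ≤ ‖x ε‖

/-- A slow scale net. -/
def SlowScale {V : Type*} [NormedAddCommGroup V] (x : ℝ → V) : Prop :=
  ∀ a : ℝ, 0 < a → SmallE fun ε => ‖x ε‖ ≤ ε ^ (-a)

/-- A slow scale net of positive reals. -/
def SlowScalePos (R : ℝ → ℝ) : Prop :=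
  (∀ ε : ℝ, 0 < ε → ε ≤ 1 → 0 < R ε) ∧
    ∀ a : ℝ, 0 < a → SmallE fun ε => R ε ≤ ε ^ (-a)

/-- First order partial derivative in the `i`-th coordinate direction. -/
def pd {d : ℕ} {F : Type*} [NormedAddCommGroup F] [NormedSpace ℝ F]
    (i : Fin d) (f : Eu d → F) : Eu d → F :=
  fun x => fderiv ℝ f x (EuclideanSpace.single i 1)

/-- Iterated partial derivative `∂^α` along a list of coordinate directions
(a multi-index `α`). -/
def pdL {d : ℕ} {F : Type*} [NormedAddCommGroup F] [NormedSpace ℝ F]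
    (L : List (Fin d)) (f : Eu d → F) : Eu d → F :=
  L.foldr pd f

/-- A moderate net of smooth functions on an open set `Ω`. -/
def SmoothModNetOn {d : ℕ} (Ω : Set (Eu d)) (u : ℝ → Eu d → ℂ) : Prop :=
  (∀ ε : ℝ, 0 < ε → ε ≤ 1 → ContDiffOn ℝ (⊤ : ℕ∞) (u ε) Ω) ∧
    ∀ K : Set (Eu d), IsCompact K → K ⊆ Ω → ∀ L : List (Fin d), ∃ N : ℕ,
      SmallE fun ε => ∀ x ∈ K, ‖pdL L (u ε) x‖ ≤ ε ^ (-(N : ℝ))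

/-- A moderate net of smooth functions with supports all contained in one
common compact subset of `Ω`. -/
def CptModNet {d : ℕ} (Ω : Set (Eu d)) (v : ℝ → Eu d → ℂ) : Prop :=
  (∀ ε : ℝ, 0 < ε → ε ≤ 1 → ContDiff ℝ (⊤ : ℕ∞) (v ε)) ∧
  (∃ K : Set (Eu d), IsCompact K ∧ K ⊆ Ω ∧
    ∀ ε : ℝ, 0 < ε → ε ≤ 1 → tsupport (v ε) ⊆ K) ∧
  (∀ L : List (Fin d), ∃ N : ℕ, SmallE fun ε =>
    ∀ x : Eu d, ‖pdL L (v ε) x‖ ≤ ε ^ (-(N : ℝ)))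

/-- The Fourier transform `∫ e^{-i x·ξ} w(x) dx`. -/
def FT {d : ℕ} (w : Eu d → ℂ) (ξ : Eu d) : ℂ :=
  ∫ x : Eu d, Complex.exp (-(Complex.I * ((⟪x, ξ⟫ : ℝ) : ℂ))) * w x

/-- The net `(u_ε)` is microlocally regular at the generalized point `(x₀, ξ₀)`. -/
def MicroReg {d : ℕ} (Ω : Set (Eu d)) (u : ℝ → Eu d → ℂ) (x₀ ξ₀ : ℝ → Eu d) : Prop :=
  ∃ v : ℝ → Eu d → ℂ, CptModNet Ω v ∧
    (∀ m : ℕ, 1 ≤ m → SmallE fun ε => ∀ x : Eu d,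
      ‖x - x₀ ε‖ ≤ ε ^ (1 / (m : ℝ)) → ‖u ε x - v ε x‖ ≤ ε ^ (m : ℝ)) ∧
    (∀ m : ℕ, 1 ≤ m → SmallE fun ε => ∀ ξ : Eu d,
      ε ^ (-(1 / (m : ℝ))) ≤ ‖ξ‖ → ‖‖ξ‖⁻¹ • ξ - ξ₀ ε‖ ≤ ε ^ (1 / (m : ℝ)) →
        ‖FT (v ε) ξ‖ ≤ ε ^ (m : ℝ))

/-- The "japanese bracket" `⟨ξ⟩ = (1+|ξ|²)^{1/2}`. -/
def jap {d : ℕ} (ξ : Eu d) : ℝ := Real.sqrt (1 + ‖ξ‖ ^ 2)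

/-- An S-moderate net of Schwartz functions. -/
def SModNet {d : ℕ} (v : ℝ → SchwartzMap (Eu d) ℂ) : Prop :=
  ∀ (L : List (Fin d)) (β : Fin d → ℕ), ∃ N : ℕ, SmallE fun ε =>
    ∀ x : Eu d, |∏ j, (x j) ^ (β j)| * ‖pdL L (⇑(v ε)) x‖ ≤ ε ^ (-(N : ℝ))

section Stmt11Aux

variable {d : ℕ}

private lemma negNet_zero {V : Type*} [NormedAddCommGroup V] :
    NegNet (fun _ : ℝ => (0 : V)) := by
  intro m
  exact ⟨1, one_pos, fun ε hε _ => by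
    simp only [norm_zero]
    positivity⟩

private lemma negNet_le_eps {n : ℝ → ℝ} (hn : NegNet n) :
    ∃ ε₂ : ℝ, 0 < ε₂ ∧ ∀ ε : ℝ, 0 < ε → ε ≤ ε₂ → n ε ≤ ε := by
  obtain ⟨ε₂, h2, hb⟩ := hn 1
  refine ⟨ε₂, h2, fun ε hε hε2 => ?_⟩
  have := hb ε hε hε2
  simp only [Real.norm_eq_abs, Nat.cast_one, Real.rpow_one] at this
  exact (le_abs_self _).trans this

private lemma arith_contra {ε : ℝ} (hε : 0 < ε) (h2 : ε ≤ 2⁻¹) (N : ℕ) :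
    ε ^ (-(N : ℝ)) + ε ≤ ε ^ (-((N + 1 : ℕ) : ℝ)) := by
  have h1 : ε ≤ 1 := h2.trans (by norm_num)
  have hN : (1 : ℝ) ≤ ε ^ (-(N : ℝ)) :=
    Real.one_le_rpow_of_pos_of_le_one_of_nonpos hε h1 (neg_nonpos.mpr (Nat.cast_nonneg N))
  have hi : (2 : ℝ) ≤ ε⁻¹ := le_inv_of_le_inv₀ hε h2
  have hpos : (0 : ℝ) < ε ^ (-(N : ℝ)) := Real.rpow_pos_of_pos hε _
  have key : ε ^ (-((N + 1 : ℕ) : ℝ)) = ε ^ (-(N : ℝ)) * ε⁻¹ := by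
    rw [← Real.rpow_neg_one ε, ← Real.rpow_add hε]
    push_cast
    ring_nf
  rw [key]
  nlinarith [hN, hi, hpos, h1.trans hN]

private lemma modNet_of_bound {x : ℝ → Eu d} {C : ℝ}
    (hC : ∀ ε : ℝ, 0 < ε → ε ≤ 1 → ‖x ε‖ ≤ C) : ModNet x := by
  refine ⟨1, min 1 (max C 1)⁻¹, by positivity, fun ε hε hle => ?_⟩
  have h1 : ε ≤ 1 := hle.trans (min_le_left _ _)
  have h2 : ε ≤ (max C 1)⁻¹ := hle.trans (min_le_right _ _)
  have h3 : max C 1 ≤ ε⁻¹ := le_inv_of_le_inv₀ hε h2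
  calc ‖x ε‖ ≤ C := hC ε hε h1
    _ ≤ max C 1 := le_max_left _ _
    _ ≤ ε⁻¹ := h3
    _ = ε ^ (-((1 : ℕ) : ℝ)) := by rw [Nat.cast_one, Real.rpow_neg_one]

private lemma not3 {x₀ : ℝ → Eu d} {u : ℝ → Eu d → ℂ}
    (h3 : ¬ ∃ N : ℕ, ∀ m : ℕ, 1 ≤ m → ∀ L : List (Fin d), SmallE fun ε =>
      ∀ x : Eu d, ‖x - x₀ ε‖ ≤ ε ^ (1 / (m : ℝ)) → ‖pdL L (u ε) x‖ ≤ ε ^ (-(N : ℝ))) :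
    ∀ N : ℕ, ∃ m : ℕ, 1 ≤ m ∧ ∃ L : List (Fin d), ∀ ε₀ : ℝ, 0 < ε₀ →
      ∃ ε : ℝ, (0 < ε ∧ ε ≤ ε₀) ∧ ∃ y : Eu d,
        ‖y - x₀ ε‖ ≤ ε ^ (1 / (m : ℝ)) ∧ ε ^ (-(N : ℝ)) < ‖pdL L (u ε) y‖ := by
  intro N
  by_contra hc
  push_neg at hc
  refine h3 ⟨N, fun m hm L => ?_⟩
  obtain ⟨ε₀, hε₀, hP⟩ := hc m hm L
  exact ⟨ε₀, hε₀, fun ε h h' => hP ε ⟨h, h'⟩⟩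

private lemma dir32 (x₀ : ℝ → Eu d) (u : ℝ → Eu d → ℂ)
    (h3 : ∃ N : ℕ, ∀ m : ℕ, 1 ≤ m → ∀ L : List (Fin d), SmallE fun ε =>
      ∀ x : Eu d, ‖x - x₀ ε‖ ≤ ε ^ (1 / (m : ℝ)) → ‖pdL L (u ε) x‖ ≤ ε ^ (-(N : ℝ))) :
    ∃ N : ℕ, ∀ L : List (Fin d), ∀ x : ℝ → Eu d, ModNet x →
      FastInf (fun ε => x ε - x₀ ε) →
      ∃ n' : ℝ → ℝ, NegNet n' ∧
        SmallE fun ε => ‖pdL L (u ε) (x ε)‖ ≤ ε ^ (-(N : ℝ)) + n' ε := by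
  obtain ⟨N, hN⟩ := h3
  refine ⟨N, fun L x _ hfast => ?_⟩
  obtain ⟨a, ha, ε₁, hε₁, hfa⟩ := hfast
  set m : ℕ := max 1 ⌈1 / a⌉₊ with hm_def
  have hm : 1 ≤ m := le_max_left _ _
  have hmpos : (0 : ℝ) < (m : ℝ) := by exact_mod_cast hm
  have hma : 1 / (m : ℝ) ≤ a := by
    have h1 : 1 / a ≤ (m : ℝ) := by
      refine (Nat.le_ceil _).trans ?_
      exact_mod_cast le_max_right 1 ⌈1 / a⌉₊
    rw [div_le_iff₀ hmpos]
    have := (div_le_iff₀ ha).mp h1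
    nlinarith
  obtain ⟨ε₂, hε₂, hP⟩ := hN m hm L
  refine ⟨fun _ => 0, negNet_zero, min 1 (min ε₁ ε₂), by positivity, fun ε hε hle => ?_⟩
  have h1 : ε ≤ 1 := hle.trans (min_le_left _ _)
  have hle₁ : ε ≤ ε₁ := hle.trans ((min_le_right _ _).trans (min_le_left _ _))
  have hle₂ : ε ≤ ε₂ := hle.trans ((min_le_right _ _).trans (min_le_right _ _))
  have hdev : ‖x ε - x₀ ε‖ ≤ ε ^ (1 / (m : ℝ)) := by
    have := hfa ε hε hle₁
    simp only at this
    exact this.trans (Real.rpow_le_rpow_of_exponent_ge hε h1 hma)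
  have := hP ε hε hle₂ (x ε) hdev
  simpa using this

private lemma dir23 (K : Set (Eu d)) (hK : IsCompact K)
    (x₀ : ℝ → Eu d) (hx₀ : ∀ ε : ℝ, 0 < ε → ε ≤ 1 → x₀ ε ∈ K)
    (u : ℝ → Eu d → ℂ)
    (h2 : ∃ N : ℕ, ∀ L : List (Fin d), ∀ x : ℝ → Eu d, ModNet x →
      FastInf (fun ε => x ε - x₀ ε) →
      ∃ n' : ℝ → ℝ, NegNet n' ∧
        SmallE fun ε => ‖pdL L (u ε) (x ε)‖ ≤ ε ^ (-(N : ℝ)) + n' ε) :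
    ∃ N : ℕ, ∀ m : ℕ, 1 ≤ m → ∀ L : List (Fin d), SmallE fun ε =>
      ∀ x : Eu d, ‖x - x₀ ε‖ ≤ ε ^ (1 / (m : ℝ)) → ‖pdL L (u ε) x‖ ≤ ε ^ (-(N : ℝ)) := by
  classical
  by_contra h3
  obtain ⟨N₂, hN₂⟩ := h2
  obtain ⟨m, hm, L, hbad⟩ := not3 h3 (N₂ + 1)
  set B : ℝ → Prop := fun ε => ∃ y : Eu d,
    ‖y - x₀ ε‖ ≤ ε ^ (1 / (m : ℝ)) ∧ ε ^ (-((N₂ + 1 : ℕ) : ℝ)) < ‖pdL L (u ε) y‖ with hB_def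
  set x : ℝ → Eu d := fun ε => if h : B ε then h.choose else x₀ ε with hx_def
  have hdev : ∀ ε : ℝ, 0 < ε → ‖x ε - x₀ ε‖ ≤ ε ^ (1 / (m : ℝ)) := by
    intro ε hε
    by_cases hb : B ε
    · simp only [hx_def, dif_pos hb]
      exact hb.choose_spec.1
    · simp only [hx_def, dif_neg hb, sub_self, norm_zero]
      positivity
  have hmod : ModNet x := by
    obtain ⟨C, hC⟩ := hK.isBounded.exists_norm_le
    refine modNet_of_bound (C := C + 1) ?_
    intro ε hε h1
    calc ‖x ε‖ = ‖(x ε - x₀ ε) + x₀ ε‖ := by congr 1; abel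
      _ ≤ ‖x ε - x₀ ε‖ + ‖x₀ ε‖ := norm_add_le _ _
      _ ≤ ε ^ (1 / (m : ℝ)) + C := add_le_add (hdev ε hε) (hC _ (hx₀ ε hε h1))
      _ ≤ 1 + C := by
          have : ε ^ (1 / (m : ℝ)) ≤ 1 := Real.rpow_le_one hε.le h1 (by positivity)
          linarith
      _ = C + 1 := by ring
  have hfast : FastInf (fun ε => x ε - x₀ ε) := by
    refine ⟨1 / (m : ℝ), by positivity, 1, one_pos, fun ε hε h1 => ?_⟩
    simpa using hdev ε hε
  obtain ⟨n', hn', ε₃, hε₃, hbound⟩ := hN₂ L x hmod hfast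
  obtain ⟨ε₄, hε₄, hn1⟩ := negNet_le_eps hn'
  obtain ⟨ε, ⟨hεpos, hεle⟩, y, hy1, hy2⟩ := hbad (min (min ε₃ ε₄) 2⁻¹) (by positivity)
  have hBε : B ε := ⟨y, hy1, hy2⟩
  have hxε : x ε = hBε.choose := by simp only [hx_def, dif_pos hBε]
  have hlarge : ε ^ (-((N₂ + 1 : ℕ) : ℝ)) < ‖pdL L (u ε) (x ε)‖ := by
    rw [hxε]; exact hBε.choose_spec.2
  have hb1 : ‖pdL L (u ε) (x ε)‖ ≤ ε ^ (-(N₂ : ℝ)) + n' ε :=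
    hbound ε hεpos (hεle.trans ((min_le_left _ _).trans (min_le_left _ _)))
  have hb2 : n' ε ≤ ε :=
    hn1 ε hεpos (hεle.trans ((min_le_left _ _).trans (min_le_right _ _)))
  have hb3 : ε ^ (-(N₂ : ℝ)) + ε ≤ ε ^ (-((N₂ + 1 : ℕ) : ℝ)) :=
    arith_contra hεpos (hεle.trans (min_le_right _ _)) N₂
  linarith

private lemma dir31 (x₀ : ℝ → Eu d) (u : ℝ → Eu d → ℂ)
    (h3 : ∃ N : ℕ, ∀ m : ℕ, 1 ≤ m → ∀ L : List (Fin d), SmallE fun ε =>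
      ∀ x : Eu d, ‖x - x₀ ε‖ ≤ ε ^ (1 / (m : ℝ)) → ‖pdL L (u ε) x‖ ≤ ε ^ (-(N : ℝ))) :
    ∃ r : ℝ → ℝ, SlowInfPos r ∧ ∀ x : ℝ → Eu d, ModNet x →
      (∃ n : ℝ → ℝ, NegNet n ∧ SmallE fun ε => ‖x ε - x₀ ε‖ ≤ r ε + n ε) →
      ∃ N : ℕ, ∀ L : List (Fin d), ∃ n' : ℝ → ℝ, NegNet n' ∧
        SmallE fun ε => ‖pdL L (u ε) (x ε)‖ ≤ ε ^ (-(N : ℝ)) + n' ε := by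
  classical
  obtain ⟨N, hN⟩ := h3
  choose τ hτpos hτ using hN
  -- thresholds indexed by a natural number code
  set g : ℕ → ℕ → ℝ := fun M j =>
    if hM : 1 ≤ M then (Encodable.decode (α := List (Fin d)) j).elim 1 (τ M hM) else 1
    with hg_def
  have hgpos : ∀ M j, 0 < g M j := by
    intro M j
    by_cases hM : 1 ≤ M
    · rcases h : Encodable.decode (α := List (Fin d)) j with _ | L
      · simp [hg_def, hM, h]
      · simp only [hg_def, dif_pos hM, h, Option.elim]
        exact hτpos M hM L
    · simp [hg_def, hM]
  set σ : ℕ → ℝ := fun M => (Finset.range (M + 1)).inf' ⟨0, by simp⟩ fun k =>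
    min ((Finset.range (k + 1) ×ˢ Finset.range (k + 1)).inf' ⟨(0, 0), by simp⟩
      fun p => g p.1 p.2) ((2 : ℝ)⁻¹ ^ (k * k)) with hσ_def
  have hσpos : ∀ M, 0 < σ M := by
    intro M
    rw [hσ_def]; apply (Finset.lt_inf'_iff ..).mpr
    intro k _
    refine lt_min ?_ (by positivity)
    apply (Finset.lt_inf'_iff ..).mpr
    intro p _
    exact hgpos p.1 p.2
  have hσanti : ∀ k M : ℕ, k ≤ M → σ M ≤ σ k := by
    intro k M hkM
    rw [hσ_def]; apply (Finset.le_inf'_iff ..).mpr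
    intro b hb
    exact Finset.inf'_le _ (by
      simp only [Finset.mem_range, Nat.lt_succ_iff] at hb ⊢
      omega)
  have hσsmall : ∀ M, σ M ≤ (2 : ℝ)⁻¹ ^ (M * M) := by
    intro M
    exact (Finset.inf'_le _ (by simp)).trans (min_le_right _ _)
  have hσg : ∀ (M m' j : ℕ), m' ≤ M → j ≤ M → σ M ≤ g m' j := by
    intro M m' j hm' hj
    refine (Finset.inf'_le _ (Finset.self_mem_range_succ M)).trans ?_
    refine (min_le_left _ _).trans ?_
    refine Finset.inf'_le (fun p => g p.1 p.2) (b := (m', j)) ?_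
    rw [Finset.mem_product]
    simp only [Finset.mem_range, Nat.lt_succ_iff]
    exact ⟨hm', hj⟩
  have hex : ∀ ε : ℝ, 0 < ε → ∃ M, σ M < ε := by
    intro ε hε
    obtain ⟨n, hn⟩ := exists_pow_lt_of_lt_one hε (by norm_num : (2 : ℝ)⁻¹ < 1)
    refine ⟨n + 1, lt_of_le_of_lt ((hσsmall (n + 1)).trans ?_) hn⟩
    exact pow_le_pow_of_le_one (by norm_num) (by norm_num) (by nlinarith)
  set μ : ℝ → ℕ := fun ε => if h : 0 < ε then max 2 (Nat.find (hex ε h) - 1) else 2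
    with hμ_def
  have hμ2 : ∀ ε, 2 ≤ μ ε := by
    intro ε
    by_cases h : 0 < ε <;> simp [hμ_def, h]
  have hμge : ∀ (ε : ℝ) (hε : 0 < ε) (M : ℕ), ε ≤ σ M → M ≤ μ ε := by
    intro ε hε M hεM
    have hfind : M < Nat.find (hex ε hε) := by
      rw [Nat.lt_find_iff]
      intro k hk
      exact not_lt.mpr (hεM.trans (hσanti k M hk))
    simp only [hμ_def, dif_pos hε]
    omega
  have hμle : ∀ (ε : ℝ) (hε : 0 < ε), ε ≤ σ 2 → ε ≤ σ (μ ε) := by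
    intro ε hε hε2
    have h3' : 2 < Nat.find (hex ε hε) := by
      rw [Nat.lt_find_iff]
      intro k hk
      exact not_lt.mpr (hε2.trans (hσanti k 2 hk))
    have hμεeq : μ ε = Nat.find (hex ε hε) - 1 := by
      simp only [hμ_def, dif_pos hε]
      omega
    have := Nat.find_min (hex ε hε) (m := Nat.find (hex ε hε) - 1) (by omega)
    rw [hμεeq]
    exact not_lt.mp this
  -- the slow scale radius
  set r : ℝ → ℝ := fun ε => if h : 0 < ε then 2⁻¹ * ε ^ (1 / (μ ε : ℝ)) else 1 with hr_def
  have hrpos : ∀ ε : ℝ, 0 < ε → ε ≤ 1 → 0 < r ε := by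
    intro ε hε _
    simp only [hr_def, dif_pos hε]
    have := Real.rpow_pos_of_pos hε (1 / (μ ε : ℝ))
    linarith
  have hμcastpos : ∀ ε : ℝ, (0 : ℝ) < (μ ε : ℝ) := by
    intro ε
    have := hμ2 ε
    exact_mod_cast by omega
  -- upper bound for ε^{1/μ ε}
  have hub : ∀ ε : ℝ, 0 < ε → ε ≤ σ 2 → ε ^ (1 / (μ ε : ℝ)) ≤ (2 : ℝ)⁻¹ ^ (μ ε) := by
    intro ε hε hε2
    have h1 : ε ≤ (2 : ℝ)⁻¹ ^ (μ ε * μ ε) := (hμle ε hε hε2).trans (hσsmall (μ ε))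
    have h2 : ε ^ (1 / (μ ε : ℝ)) ≤ ((2 : ℝ)⁻¹ ^ (μ ε * μ ε)) ^ (1 / (μ ε : ℝ)) :=
      Real.rpow_le_rpow hε.le h1 (by positivity)
    refine h2.trans_eq ?_
    rw [← Real.rpow_natCast (2 : ℝ)⁻¹ (μ ε * μ ε), ← Real.rpow_mul (by norm_num),
      ← Real.rpow_natCast (2 : ℝ)⁻¹ (μ ε)]
    congr 1
    have hne : ((μ ε : ℝ)) ≠ 0 := (hμcastpos ε).ne'
    push_cast
    field_simp
  have hslow : SlowInfPos r := by
    refine ⟨hrpos, fun a ha => ?_⟩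
    obtain ⟨n₀, hn₀⟩ := exists_pow_lt_of_lt_one ha (by norm_num : (2 : ℝ)⁻¹ < 1)
    set M : ℕ := max 2 (max n₀ ⌈2 / a⌉₊) with hM_def
    refine ⟨min (σ M) (min ((2 : ℝ)⁻¹ ^ (2 / a)) 1), lt_min (hσpos M) (lt_min (by positivity) one_pos), fun ε hε hle => ?_⟩
    have hεM : ε ≤ σ M := hle.trans (min_le_left _ _)
    have hεhalf : ε ≤ (2 : ℝ)⁻¹ ^ (2 / a) :=
      hle.trans ((min_le_right _ _).trans (min_le_left _ _))
    have hε1 : ε ≤ 1 := hle.trans ((min_le_right _ _).trans (min_le_right _ _))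
    have hεσ2 : ε ≤ σ 2 := hεM.trans (hσanti 2 M (le_max_left _ _))
    have hMμ : M ≤ μ ε := hμge ε hε M hεM
    have hμa : 2 / a ≤ (μ ε : ℝ) := by
      refine (Nat.le_ceil _).trans ?_
      have : (⌈2 / a⌉₊ : ℕ) ≤ μ ε := le_trans (le_trans (le_max_right _ _) (le_max_right _ _)) hMμ
      exact_mod_cast this
    have hinvμ : 1 / (μ ε : ℝ) ≤ a / 2 := by
      rw [div_le_div_iff₀ (hμcastpos ε) (by norm_num)]
      have := (div_le_iff₀ ha).mp hμa
      nlinarith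
    constructor
    · -- ε ^ a ≤ r ε
      simp only [hr_def, dif_pos hε]
      have hsplit : ε ^ a = ε ^ (a - 1 / (μ ε : ℝ)) * ε ^ (1 / (μ ε : ℝ)) := by
        rw [← Real.rpow_add hε]
        ring_nf
      have hexp : ε ^ (a - 1 / (μ ε : ℝ)) ≤ ε ^ (a / 2) := by
        refine Real.rpow_le_rpow_of_exponent_ge hε hε1 ?_
        linarith
      have hhalf : ε ^ (a / 2) ≤ 2⁻¹ := by
        have h1 : ε ^ (a / 2) ≤ ((2 : ℝ)⁻¹ ^ (2 / a)) ^ (a / 2) :=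
          Real.rpow_le_rpow hε.le hεhalf (by positivity)
        refine h1.trans_eq ?_
        rw [← Real.rpow_mul (by norm_num)]
        rw [show (2 / a) * (a / 2) = 1 by field_simp]
        exact Real.rpow_one _
      calc ε ^ a = ε ^ (a - 1 / (μ ε : ℝ)) * ε ^ (1 / (μ ε : ℝ)) := hsplit
        _ ≤ 2⁻¹ * ε ^ (1 / (μ ε : ℝ)) := by
            have h0 : (0 : ℝ) ≤ ε ^ (1 / (μ ε : ℝ)) := (Real.rpow_pos_of_pos hε _).le
            exact mul_le_mul_of_nonneg_right (hexp.trans hhalf) h0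
    · -- r ε ≤ a
      simp only [hr_def, dif_pos hε]
      have h1 : ε ^ (1 / (μ ε : ℝ)) ≤ (2 : ℝ)⁻¹ ^ (μ ε) := hub ε hε hεσ2
      have h2 : ((2 : ℝ)⁻¹) ^ (μ ε) ≤ (2 : ℝ)⁻¹ ^ n₀ := by
        refine pow_le_pow_of_le_one (by norm_num) (by norm_num) ?_
        exact le_trans (le_trans (le_max_left _ _) (le_max_right _ _)) hMμ
      have h3 : ((2 : ℝ)⁻¹ : ℝ) ^ n₀ ≤ a := hn₀.le
      have h0 : (0 : ℝ) < (2 : ℝ)⁻¹ ^ (μ ε) := by positivity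
      nlinarith
  refine ⟨r, hslow, fun x _ hdev => ?_⟩
  obtain ⟨n, hn, ε₁, hε₁pos, hdevle⟩ := hdev
  refine ⟨N, fun L => ⟨fun _ => 0, negNet_zero, ?_⟩⟩
  obtain ⟨ε₂, hε₂pos, hn1⟩ := negNet_le_eps hn
  set ML : ℕ := max 2 (Encodable.encode L) with hML_def
  refine ⟨min (min ε₁ ε₂) (min (σ ML) 4⁻¹), lt_min (lt_min hε₁pos hε₂pos) (lt_min (hσpos ML) (by norm_num)), fun ε hε hle => ?_⟩
  have hle₁ : ε ≤ ε₁ := hle.trans ((min_le_left _ _).trans (min_le_left _ _))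
  have hle₂ : ε ≤ ε₂ := hle.trans ((min_le_left _ _).trans (min_le_right _ _))
  have hleσ : ε ≤ σ ML := hle.trans ((min_le_right _ _).trans (min_le_left _ _))
  have hle4 : ε ≤ 4⁻¹ := hle.trans ((min_le_right _ _).trans (min_le_right _ _))
  have hε1 : ε ≤ 1 := hle4.trans (by norm_num)
  have hεσ2 : ε ≤ σ 2 := hleσ.trans (hσanti 2 ML (le_max_left _ _))
  have hMLμ : ML ≤ μ ε := hμge ε hε ML hleσ
  have hεσμ : ε ≤ σ (μ ε) := hμle ε hε hεσ2
  have hm1 : 1 ≤ μ ε := le_trans (by norm_num) (hμ2 ε)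
  have hετ : ε ≤ τ (μ ε) hm1 L := by
    have h1 : ε ≤ g (μ ε) (Encodable.encode L) := by
      refine hεσμ.trans (hσg (μ ε) (μ ε) (Encodable.encode L) le_rfl ?_)
      exact le_trans (le_max_right _ _) hMLμ
    simpa only [hg_def, dif_pos hm1, Encodable.encodek, Option.elim] using h1
  -- x ε is within ε^{1/μ ε} of x₀ ε
  have hεsmall : ε ≤ 2⁻¹ * ε ^ (1 / (μ ε : ℝ)) := by
    have hsplit : ε = ε ^ (1 - 1 / (μ ε : ℝ)) * ε ^ (1 / (μ ε : ℝ)) := by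
      rw [← Real.rpow_add hε]
      norm_num
    have hinvμ : 1 / (μ ε : ℝ) ≤ 2⁻¹ := by
      rw [div_le_iff₀ (hμcastpos ε)]
      have h2 : (2 : ℝ) ≤ (μ ε : ℝ) := by exact_mod_cast hμ2 ε
      nlinarith
    have hexp : ε ^ (1 - 1 / (μ ε : ℝ)) ≤ ε ^ ((2 : ℝ)⁻¹) := by
      refine Real.rpow_le_rpow_of_exponent_ge hε hε1 ?_
      linarith
    have h4 : ε ^ ((2 : ℝ)⁻¹) ≤ (4⁻¹ : ℝ) ^ ((2 : ℝ)⁻¹) :=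
      Real.rpow_le_rpow hε.le hle4 (by norm_num)
    have h5 : ((4 : ℝ)⁻¹) ^ ((2 : ℝ)⁻¹) = 2⁻¹ := by
      rw [show ((4 : ℝ)⁻¹) = ((2 : ℝ)⁻¹) ^ (2 : ℕ) by norm_num,
        ← Real.rpow_natCast ((2 : ℝ)⁻¹) 2, ← Real.rpow_mul (by norm_num)]
      norm_num
    have h0 : (0 : ℝ) ≤ ε ^ (1 / (μ ε : ℝ)) := (Real.rpow_pos_of_pos hε _).le
    calc ε = ε ^ (1 - 1 / (μ ε : ℝ)) * ε ^ (1 / (μ ε : ℝ)) := hsplit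
      _ ≤ 2⁻¹ * ε ^ (1 / (μ ε : ℝ)) :=
          mul_le_mul_of_nonneg_right (hexp.trans (h4.trans_eq h5)) h0
  have hdevx : ‖x ε - x₀ ε‖ ≤ ε ^ (1 / (μ ε : ℝ)) := by
    have h1 := hdevle ε hε hle₁
    have h2 : n ε ≤ ε := hn1 ε hε hle₂
    have h3 : r ε = 2⁻¹ * ε ^ (1 / (μ ε : ℝ)) := by simp only [hr_def, dif_pos hε]
    calc ‖x ε - x₀ ε‖ ≤ r ε + n ε := h1
      _ ≤ 2⁻¹ * ε ^ (1 / (μ ε : ℝ)) + ε := by rw [h3]; linarith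
      _ ≤ 2⁻¹ * ε ^ (1 / (μ ε : ℝ)) + 2⁻¹ * ε ^ (1 / (μ ε : ℝ)) := by linarith [hεsmall]
      _ = ε ^ (1 / (μ ε : ℝ)) := by ring
  have := hτ (μ ε) hm1 L ε hε hετ (x ε) hdevx
  simpa using this

private lemma dir13 (K : Set (Eu d)) (hK : IsCompact K)
    (x₀ : ℝ → Eu d) (hx₀ : ∀ ε : ℝ, 0 < ε → ε ≤ 1 → x₀ ε ∈ K)
    (u : ℝ → Eu d → ℂ)
    (h1 : ∃ r : ℝ → ℝ, SlowInfPos r ∧ ∀ x : ℝ → Eu d, ModNet x →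
      (∃ n : ℝ → ℝ, NegNet n ∧ SmallE fun ε => ‖x ε - x₀ ε‖ ≤ r ε + n ε) →
      ∃ N : ℕ, ∀ L : List (Fin d), ∃ n' : ℝ → ℝ, NegNet n' ∧
        SmallE fun ε => ‖pdL L (u ε) (x ε)‖ ≤ ε ^ (-(N : ℝ)) + n' ε) :
    ∃ N : ℕ, ∀ m : ℕ, 1 ≤ m → ∀ L : List (Fin d), SmallE fun ε =>
      ∀ x : Eu d, ‖x - x₀ ε‖ ≤ ε ^ (1 / (m : ℝ)) → ‖pdL L (u ε) x‖ ≤ ε ^ (-(N : ℝ)) := by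
  classical
  by_contra h3
  obtain ⟨r, ⟨hrpos, hrslow⟩, hmain⟩ := h1
  have hbad := not3 h3
  choose m hm Lf hb using hbad
  have hδ' : ∀ Nk : ℕ, ∃ δ : ℝ, 0 < δ ∧ ∀ ε : ℝ, 0 < ε → ε ≤ δ →
      ε ^ (1 / (m Nk : ℝ)) ≤ r ε := by
    intro Nk
    have hmpos : (0 : ℝ) < 1 / (m Nk : ℝ) := by
      have := hm Nk
      positivity
    obtain ⟨δ, hδpos, hδ⟩ := hrslow (1 / (m Nk : ℝ)) hmpos
    exact ⟨δ, hδpos, fun ε h h' => (hδ ε h h').1⟩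
  choose δ hδpos hδle using hδ'
  set φ : ℕ → ℕ := fun k => (Nat.unpair k).1 with hφ_def
  set pick : ℕ → ℝ → ℝ × Eu d := fun k prev =>
    if h : 0 < min (min prev (δ (φ k))) ((2 : ℝ)⁻¹ ^ (k + 1)) / 2 then
      ((hb (φ k) _ h).choose, (hb (φ k) _ h).choose_spec.2.choose)
    else (1, 0) with hpick_def
  set S : ℕ → ℝ × Eu d := fun k =>
    Nat.rec ((1 : ℝ), (0 : Eu d)) (fun k ih => pick k ih.1) k with hS_def
  have hSsucc : ∀ k, S (k + 1) = pick k (S k).1 := fun k => rfl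
  have hSrec : ∀ k, 0 < (S k).1 →
      ((0 < (S (k + 1)).1 ∧
        (S (k + 1)).1 ≤ min (min ((S k).1) (δ (φ k))) ((2 : ℝ)⁻¹ ^ (k + 1)) / 2) ∧
       ‖(S (k + 1)).2 - x₀ ((S (k + 1)).1)‖ ≤ ((S (k + 1)).1) ^ (1 / (m (φ k) : ℝ)) ∧
       ((S (k + 1)).1) ^ (-((φ k : ℕ) : ℝ)) <
         ‖pdL (Lf (φ k)) (u ((S (k + 1)).1)) ((S (k + 1)).2)‖) := by
    intro k hk
    have h : 0 < min (min ((S k).1) (δ (φ k))) ((2 : ℝ)⁻¹ ^ (k + 1)) / 2 := by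
      have h1 : 0 < min (min ((S k).1) (δ (φ k))) ((2 : ℝ)⁻¹ ^ (k + 1)) :=
        lt_min (lt_min hk (hδpos (φ k))) (by positivity)
      linarith
    have e : S (k + 1) = ((hb (φ k) _ h).choose, (hb (φ k) _ h).choose_spec.2.choose) := by
      rw [hSsucc, hpick_def]
      exact dif_pos h
    have H1 := (hb (φ k) _ h).choose_spec.1
    have H2 := (hb (φ k) _ h).choose_spec.2.choose_spec
    rw [e]
    exact ⟨⟨H1.1, H1.2⟩, H2.1, H2.2⟩
  have hSpos : ∀ k, 0 < (S k).1 := by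
    intro k
    induction k with
    | zero => exact one_pos
    | succ k ih => exact ((hSrec k ih).1).1
  set E : ℕ → ℝ := fun k => (S k).1 with hE_def
  have hEdec : ∀ k, E (k + 1) < E k := by
    intro k
    have h := ((hSrec k (hSpos k)).1).2
    have h2 : E (k + 1) ≤ E k / 2 := by
      refine h.trans ?_
      have := min_le_left (min (E k) (δ (φ k))) ((2 : ℝ)⁻¹ ^ (k + 1))
      have := min_le_left (E k) (δ (φ k))
      simp only [hE_def]
      nlinarith [hSpos k]
    have := hSpos k
    simp only [hE_def] at *
    linarith
  have hEanti : StrictAnti E := strictAnti_nat_of_succ_lt hEdec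
  have hEsmall : ∀ k, E (k + 1) ≤ (2 : ℝ)⁻¹ ^ (k + 1) := by
    intro k
    refine (((hSrec k (hSpos k)).1).2).trans ?_
    have h1 := min_le_right (min (E k) (δ (φ k))) ((2 : ℝ)⁻¹ ^ (k + 1))
    have h2 : (0 : ℝ) < (2 : ℝ)⁻¹ ^ (k + 1) := by positivity
    simp only [hE_def] at *
    linarith
  have hEδ : ∀ k, E (k + 1) ≤ δ (φ k) := by
    intro k
    refine (((hSrec k (hSpos k)).1).2).trans ?_
    have h1 : min (min (E k) (δ (φ k))) ((2 : ℝ)⁻¹ ^ (k + 1)) ≤ δ (φ k) :=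
      (min_le_left _ _).trans (min_le_right _ _)
    have h2 := hδpos (φ k)
    simp only [hE_def] at *
    linarith
  have hE1 : ∀ k, E (k + 1) ≤ 1 := by
    intro k
    refine (hEsmall k).trans ?_
    calc ((2 : ℝ)⁻¹) ^ (k + 1) ≤ (2 : ℝ)⁻¹ ^ 0 :=
        pow_le_pow_of_le_one (by norm_num) (by norm_num) (Nat.zero_le _)
      _ = 1 := pow_zero _
  set x : ℝ → Eu d := fun ε =>
    if h : ∃ k : ℕ, E (k + 1) = ε then (S (Nat.find h + 1)).2 else x₀ ε with hx_def
  have hxeq : ∀ k : ℕ, x (E (k + 1)) = (S (k + 1)).2 := by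
    intro k
    have hex : ∃ k' : ℕ, E (k' + 1) = E (k + 1) := ⟨k, rfl⟩
    have hfind : Nat.find hex = k := by
      have := Nat.find_spec hex
      have h2 : Nat.find hex + 1 = k + 1 := hEanti.injective this
      omega
    simp only [hx_def, dif_pos hex, hfind]
  have hdev : ∀ ε : ℝ, 0 < ε → ε ≤ 1 → ‖x ε - x₀ ε‖ ≤ r ε + (fun _ : ℝ => (0 : ℝ)) ε := by
    intro ε hε hε1
    simp only [add_zero]
    by_cases h : ∃ k : ℕ, E (k + 1) = ε
    · obtain ⟨k, hk⟩ := h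
      subst hk
      rw [hxeq k]
      have hs := (hSrec k (hSpos k)).2.1
      refine hs.trans ?_
      exact hδle (φ k) (E (k + 1)) hε (hEδ k)
    · simp only [hx_def, dif_neg h, sub_self, norm_zero]
      exact (hrpos ε hε hε1).le
  have hmod : ModNet x := by
    obtain ⟨C, hC⟩ := hK.isBounded.exists_norm_le
    refine modNet_of_bound (C := C + 1) ?_
    intro ε hε hε1
    by_cases h : ∃ k : ℕ, E (k + 1) = ε
    · obtain ⟨k, hk⟩ := h
      subst hk
      rw [hxeq k]
      have hs := (hSrec k (hSpos k)).2.1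
      have hr1 : (E (k + 1)) ^ (1 / (m (φ k) : ℝ)) ≤ 1 :=
        Real.rpow_le_one hε.le (hE1 k) (by positivity)
      calc ‖(S (k + 1)).2‖ = ‖((S (k + 1)).2 - x₀ (E (k + 1))) + x₀ (E (k + 1))‖ := by
            congr 1; abel
        _ ≤ ‖(S (k + 1)).2 - x₀ (E (k + 1))‖ + ‖x₀ (E (k + 1))‖ := norm_add_le _ _
        _ ≤ 1 + C := add_le_add (hs.trans hr1) (hC _ (hx₀ _ hε hε1))
        _ = C + 1 := by ring
    · simp only [hx_def, dif_neg h]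
      have := hC _ (hx₀ ε hε hε1)
      linarith
  obtain ⟨Ns, hNs⟩ := hmain x hmod ⟨fun _ => 0, negNet_zero, 1, one_pos, hdev⟩
  obtain ⟨n', hn', ε₃, hε₃, hbound⟩ := hNs (Lf (Ns + 1))
  obtain ⟨ε₄, hε₄, hn1⟩ := negNet_le_eps hn'
  obtain ⟨j, hj⟩ := exists_pow_lt_of_lt_one
    (show (0 : ℝ) < min (min ε₃ ε₄) 2⁻¹ by positivity) (by norm_num : (2 : ℝ)⁻¹ < 1)
  set k : ℕ := Nat.pair (Ns + 1) j with hk_def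
  have hφk : φ k = Ns + 1 := by simp [hφ_def, hk_def, Nat.unpair_pair]
  have hkj : j ≤ k + 1 := (Nat.right_le_pair _ _).trans (Nat.le_succ _)
  set ε : ℝ := E (k + 1) with hε_def
  have hεpos : 0 < ε := hSpos (k + 1)
  have hεsmall : ε ≤ min (min ε₃ ε₄) 2⁻¹ := by
    refine (hEsmall k).trans ?_
    calc ((2 : ℝ)⁻¹) ^ (k + 1) ≤ (2 : ℝ)⁻¹ ^ j :=
        pow_le_pow_of_le_one (by norm_num) (by norm_num) hkj
      _ ≤ min (min ε₃ ε₄) 2⁻¹ := hj.le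
  have hxε : x ε = (S (k + 1)).2 := hxeq k
  have hlarge : ε ^ (-((Ns + 1 : ℕ) : ℝ)) < ‖pdL (Lf (Ns + 1)) (u ε) (x ε)‖ := by
    have hs := (hSrec k (hSpos k)).2.2
    rw [hφk] at hs
    rw [hxε]
    exact hs
  have hb1 : ‖pdL (Lf (Ns + 1)) (u ε) (x ε)‖ ≤ ε ^ (-(Ns : ℝ)) + n' ε :=
    hbound ε hεpos (hεsmall.trans ((min_le_left _ _).trans (min_le_left _ _)))
  have hb2 : n' ε ≤ ε :=
    hn1 ε hεpos (hεsmall.trans ((min_le_left _ _).trans (min_le_right _ _)))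
  have hb3 : ε ^ (-(Ns : ℝ)) + ε ≤ ε ^ (-((Ns + 1 : ℕ) : ℝ)) :=
    arith_contra hεpos (hεsmall.trans (min_le_right _ _)) Ns
  linarith

end Stmt11Aux

/-- Proposition 4.6: pointwise characterizations of
`G^∞`-regularity on a slow scale neighbourhood of a generalized point. -/
theorem stmt11 {d : ℕ} (Ω K : Set (Eu d)) (hΩ : IsOpen Ω) (hK : IsCompact K)
    (hKΩ : K ⊆ Ω) (x₀ : ℝ → Eu d) (hx₀ : ∀ ε : ℝ, 0 < ε → ε ≤ 1 → x₀ ε ∈ K)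
    (u : ℝ → Eu d → ℂ) (hu : SmoothModNetOn Ω u) :
    [ -- (1) G^∞-bounds on a slow scale neighbourhood of x₀
      (∃ r : ℝ → ℝ, SlowInfPos r ∧ ∀ x : ℝ → Eu d, ModNet x →
        (∃ n : ℝ → ℝ, NegNet n ∧ SmallE fun ε => ‖x ε - x₀ ε‖ ≤ r ε + n ε) →
        ∃ N : ℕ, ∀ L : List (Fin d), ∃ n' : ℝ → ℝ, NegNet n' ∧
          SmallE fun ε => ‖pdL L (u ε) (x ε)‖ ≤ ε ^ (-(N : ℝ)) + n' ε),
      -- (2) uniform G^∞-bounds at all points fast-scale close to x₀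
      (∃ N : ℕ, ∀ L : List (Fin d), ∀ x : ℝ → Eu d, ModNet x →
        FastInf (fun ε => x ε - x₀ ε) →
        ∃ n' : ℝ → ℝ, NegNet n' ∧
          SmallE fun ε => ‖pdL L (u ε) (x ε)‖ ≤ ε ^ (-(N : ℝ)) + n' ε),
      -- (3) sup estimates on balls of radius ε^{1/m}
      (∃ N : ℕ, ∀ m : ℕ, 1 ≤ m → ∀ L : List (Fin d), SmallE fun ε =>
        ∀ x : Eu d, ‖x - x₀ ε‖ ≤ ε ^ (1 / (m : ℝ)) →
          ‖pdL L (u ε) x‖ ≤ ε ^ (-(N : ℝ))) ].TFAE := by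
  tfae_have 1 → 3 := dir13 K hK x₀ hx₀ u
  tfae_have 3 → 1 := dir31 x₀ u
  tfae_have 3 → 2 := dir32 x₀ u
  tfae_have 2 → 3 := dir23 K hK x₀ hx₀ u
  tfae_finish
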